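/- arXiv:2207.13493 — 7 statements merged into one kernel-verified Lean document; each statement's English description precedes it below -/
import Mathlib

section
/- Let X ∈ ℝ^{n×d} with n > d ≥ 1, and suppose there exist d rows of X all lying on an affine hyperplane H = { y ∈ ℝ^d : vᵀy = c } whose normal vector v ∈ ℝ^d has all components nonzero. Then there exists a matrix X' that differs from X in at most ⌈(n−d)/d⌉ entries in each column, such that every row of X' lies on H; consequently the sample covariance matrix of X', namely (1/n) ∑_{i=1}^n (x'_i − x̄')(x'_i − x̄')ᵀ with x̄' the mean of the rows x'_i of X', is singular. -/
open Matrix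

/-- If `d` rows of `X` lie on an affine hyperplane `{y | vᵀ y = c}` whose normal
vector has all components nonzero, then by changing at most `⌈(n-d)/d⌉` entries in
each column one obtains a dataset `X'` all of whose rows lie on that hyperplane,
whose sample covariance matrix is therefore singular. -/
theorem stmt_3 {n d : ℕ} (hd : 1 ≤ d) (hnd : d < n)
    (X : Fin n → Fin d → ℝ) (v : Fin d → ℝ) (c : ℝ)
    (hv : ∀ j, v j ≠ 0)
    (T : Finset (Fin n)) (hT : T.card = d) (hTX : ∀ i ∈ T, v ⬝ᵥ X i = c) :
    ∃ X' : Fin n → Fin d → ℝ,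
      (∀ j : Fin d, {i : Fin n | X' i j ≠ X i j}.ncard ≤ ⌈((n : ℝ) - d) / d⌉₊) ∧
      (∀ i : Fin n, v ⬝ᵥ X' i = c) ∧
      ((1 / (n : ℝ)) • ∑ i, vecMulVec
          (X' i - (1 / (n : ℝ)) • ∑ k, X' k)
          (X' i - (1 / (n : ℝ)) • ∑ k, X' k)).det = 0 := by
  have hd0 : 0 < d := hd
  have hn0 : 0 < n := lt_trans hd0 hnd
  set m := n - d with hm
  have hcompl : Tᶜ.card = m := by
    rw [Finset.card_compl, hT, Fintype.card_fin]
  set e := Tᶜ.orderIsoOfFin hcompl with he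
  classical
  set idx : Fin n → ℕ := fun i => if h : i ∈ Tᶜ then (e.symm ⟨i, h⟩ : ℕ) else 0 with hidx
  set σ : Fin n → Fin d := fun i => ⟨idx i % d, Nat.mod_lt _ hd0⟩ with hσ
  set X' : Fin n → Fin d → ℝ := fun i =>
    if i ∈ T then X i
    else Function.update (X i) (σ i)
      ((c - ∑ k ∈ Finset.univ.erase (σ i), v k * X i k) / v (σ i)) with hX'
  have hidxlt : ∀ i ∈ Tᶜ, idx i < m := by
    intro i hi
    simp only [hidx, dif_pos hi]
    exact (e.symm ⟨i, hi⟩).2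
  have hidxinj : ∀ i ∈ Tᶜ, ∀ i' ∈ Tᶜ, idx i = idx i' → i = i' := by
    intro i hi i' hi' h
    simp only [hidx, dif_pos hi, dif_pos hi'] at h
    have := e.symm.injective (Fin.val_injective h)
    simpa using congrArg Subtype.val this
  -- hyperplane condition
  have hplane : ∀ i : Fin n, v ⬝ᵥ X' i = c := by
    intro i
    by_cases hi : i ∈ T
    · simp only [hX', if_pos hi]; exact hTX i hi
    · simp only [hX', if_neg hi, dotProduct]
      rw [← Finset.add_sum_erase _ _ (Finset.mem_univ (σ i))]
      have h1 : Function.update (X i) (σ i)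
          ((c - ∑ k ∈ Finset.univ.erase (σ i), v k * X i k) / v (σ i)) (σ i)
          = (c - ∑ k ∈ Finset.univ.erase (σ i), v k * X i k) / v (σ i) := by
        simp
      have h2 : ∀ k ∈ Finset.univ.erase (σ i),
          v k * Function.update (X i) (σ i)
          ((c - ∑ k ∈ Finset.univ.erase (σ i), v k * X i k) / v (σ i)) k
          = v k * X i k := by
        intro k hk
        rw [Function.update_of_ne (Finset.ne_of_mem_erase hk)]
      rw [h1, Finset.sum_congr rfl h2, mul_div_cancel₀ _ (hv (σ i))]
      ring
  refine ⟨X', ?_, hplane, ?_⟩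
  · -- counting
    intro j
    have hsub : {i : Fin n | X' i j ≠ X i j} ⊆ ↑(Tᶜ.filter fun i => σ i = j) := by
      intro i hi
      simp only [Set.mem_setOf_eq, hX'] at hi
      by_cases hiT : i ∈ T
      · simp [if_pos hiT] at hi
      · simp only [if_neg hiT] at hi
        by_cases hj : σ i = j
        · simp [Finset.mem_coe, Finset.mem_filter, Finset.mem_compl, hiT, hj]
        · rw [Function.update_of_ne (fun h => hj h.symm)] at hi
          exact absurd rfl hi
    refine le_trans (Set.ncard_le_ncard hsub (Finset.finite_toSet _)) ?_
    rw [Set.ncard_coe_finset]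
    have hcast : ((n : ℝ) - d) = (m : ℝ) := by
      rw [hm, Nat.cast_sub (le_of_lt hnd)]
    rw [hcast, ← Finset.card_range ⌈(m : ℝ) / d⌉₊]
    apply Finset.card_le_card_of_injOn (fun i => idx i / d)
    · intro i hi
      simp only [Finset.mem_coe, Finset.mem_filter, Finset.mem_compl] at hi
      have hi' : i ∈ Tᶜ := Finset.mem_compl.mpr hi.1
      simp only [Finset.mem_coe, Finset.mem_range]
      rw [Nat.lt_ceil]
      have h1 : ((idx i / d : ℕ) : ℝ) ≤ (idx i : ℝ) / d := Nat.cast_div_le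
      have h2 : (idx i : ℝ) / d < (m : ℝ) / d := by
        apply div_lt_div_of_pos_right ?_ ?_
        · exact_mod_cast hidxlt i hi'
        · exact_mod_cast hd0
      exact lt_of_le_of_lt h1 h2
    · intro i hi i' hi' hdiv
      simp only [Finset.mem_coe, Finset.mem_filter, Finset.mem_compl] at hi hi'
      have hi1 : i ∈ Tᶜ := Finset.mem_compl.mpr hi.1
      have hi1' : i' ∈ Tᶜ := Finset.mem_compl.mpr hi'.1
      have hmod : idx i % d = idx i' % d := by
        have e1 := congrArg Fin.val hi.2
        have e2 := congrArg Fin.val hi'.2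
        simp only [hσ] at e1 e2
        rw [e1, e2]
      have hdiv' : idx i / d = idx i' / d := hdiv
      have : idx i = idx i' := by
        rw [← Nat.div_add_mod (idx i) d, ← Nat.div_add_mod (idx i') d, hdiv', hmod]
      exact hidxinj i hi1 i' hi1' this
  · -- determinant
    have hvne : v ≠ 0 := fun h => hv ⟨0, hd0⟩ (by rw [h]; rfl)
    rw [← Matrix.exists_mulVec_eq_zero_iff]
    refine ⟨v, hvne, ?_⟩
    have hμc : v ⬝ᵥ ((1 / (n : ℝ)) • ∑ i, X' i) = c := by
      have h1 : v ⬝ᵥ ((1 / (n : ℝ)) • ∑ i, X' i) = (1 / (n : ℝ)) * ∑ k, v ⬝ᵥ X' k := by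
        simp only [dotProduct, Pi.smul_apply, Finset.sum_apply, smul_eq_mul, Finset.mul_sum]
        rw [Finset.sum_comm]
        apply Finset.sum_congr rfl; intro k _
        apply Finset.sum_congr rfl; intro jj _
        ring
      rw [h1]
      simp only [hplane, Finset.sum_const, Finset.card_univ, Fintype.card_fin, nsmul_eq_mul]
      field_simp
    have huv : ∀ k : Fin n, (X' k - (1 / (n : ℝ)) • ∑ i, X' i) ⬝ᵥ v = 0 := by
      intro k
      rw [dotProduct_comm, dotProduct_sub, hplane, hμc, sub_self]
    funext i0
    simp only [Matrix.smul_apply, Matrix.sum_apply, Matrix.mulVec, dotProduct,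
      vecMulVec_apply, smul_eq_mul, Pi.zero_apply]
    have step : ∀ jj : Fin d,
        (1 / (n : ℝ) * ∑ k, (X' k - (1 / (n : ℝ)) • ∑ i, X' i) i0 *
            (X' k - (1 / (n : ℝ)) • ∑ i, X' i) jj) * v jj
        = ∑ k, 1 / (n : ℝ) * ((X' k - (1 / (n : ℝ)) • ∑ i, X' i) i0 *
            ((X' k - (1 / (n : ℝ)) • ∑ i, X' i) jj * v jj)) := by
      intro jj
      rw [Finset.mul_sum, Finset.sum_mul]
      apply Finset.sum_congr rfl; intros; ring
    rw [Finset.sum_congr rfl (fun jj _ => step jj), Finset.sum_comm]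
    apply Finset.sum_eq_zero
    intro k _
    have h0 := huv k
    calc ∑ jj, 1 / (n : ℝ) * ((X' k - (1 / (n : ℝ)) • ∑ i, X' i) i0 *
            ((X' k - (1 / (n : ℝ)) • ∑ i, X' i) jj * v jj))
        = 1 / (n : ℝ) * ((X' k - (1 / (n : ℝ)) • ∑ i, X' i) i0 *
            ((X' k - (1 / (n : ℝ)) • ∑ i, X' i) ⬝ᵥ v)) := by
          rw [dotProduct, Finset.mul_sum, Finset.mul_sum]
      _ = 0 := by rw [h0]; ring
end

section
/- Let Σ be a symmetric positive definite d×d matrix, x, μ ∈ ℝ^d, and let S be a nonempty subset of {1,…,d}. Then the partial squared Mahalanobis distance on S is bounded by the full one: (x_S − μ_S)ᵀ (Σ_{SS})^{-1} (x_S − μ_S) ≤ (x − μ)ᵀ Σ^{-1} (x − μ), where x_S, μ_S are the restrictions of x, μ to the coordinates in S and Σ_{SS} is the principal submatrix of Σ with rows and columns in S. -/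
open Matrix

/-- The partial squared Mahalanobis distance on a nonempty subset `S` of the
coordinates is bounded above by the full squared Mahalanobis distance. -/
theorem stmt_6 {d : ℕ} (A : Matrix (Fin d) (Fin d) ℝ) (hA : A.PosDef)
    (x μ : Fin d → ℝ) (S : Finset (Fin d)) (hS : S.Nonempty) :
    (fun i : ↥S => x i.val - μ i.val) ⬝ᵥ
        ((A.submatrix (fun i : ↥S => i.val) (fun i : ↥S => i.val))⁻¹).mulVec
          (fun i : ↥S => x i.val - μ i.val)
      ≤ (x - μ) ⬝ᵥ (A⁻¹).mulVec (x - μ) := by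
  classical
  set w : Fin d → ℝ := x - μ with hw
  set B : Matrix (↥S) (↥S) ℝ := A.submatrix (fun i : ↥S => i.val) (fun i : ↥S => i.val) with hBdef
  set v : ↥S → ℝ := fun i : ↥S => x i.val - μ i.val with hv
  -- extension by zero
  set ext : (↥S → ℝ) → (Fin d → ℝ) :=
    fun c i => if h : i ∈ S then c ⟨i, h⟩ else 0 with hext
  have key : ∀ (c : ↥S → ℝ) (g : Fin d → ℝ),
      (ext c) ⬝ᵥ g = ∑ i : ↥S, c i * g i.val := by
    intro c g
    rw [dotProduct, ← Finset.sum_subset S.subset_univ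
      (fun i _ hi => by simp [hext, hi]), ← Finset.sum_coe_sort]
    refine Finset.sum_congr rfl fun i _ => by simp [hext, i.2]
  -- quadratic form of the extension
  have hquad : ∀ c : ↥S → ℝ, (ext c) ⬝ᵥ (A *ᵥ ext c) = c ⬝ᵥ (B *ᵥ c) := by
    intro c
    rw [key, dotProduct]
    refine Finset.sum_congr rfl fun i _ => ?_
    congr 1
    rw [mulVec, dotProduct, mulVec, dotProduct]
    rw [← Finset.sum_subset S.subset_univ
      (fun j _ hj => by simp [hext, hj]), ← Finset.sum_coe_sort]
    refine Finset.sum_congr rfl fun j _ => by simp [hext, hBdef, j.2]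
  -- B is PosDef
  have hB : B.PosDef := by
    refine PosDef.of_dotProduct_mulVec_pos (hA.1.submatrix _) fun c hc => ?_
    have hc' : ext c ≠ 0 := by
      intro h
      apply hc
      funext i
      have := congrFun h i.val
      simpa [hext, i.2] using this
    have := hA.dotProduct_mulVec_pos hc'
    simp only [star_trivial] at this ⊢
    rwa [hquad] at this
  have hAunit : IsUnit A.det := hA.det_pos.ne'.isUnit
  have hBunit : IsUnit B.det := hB.det_pos.ne'.isUnit
  set c : ↥S → ℝ := B⁻¹ *ᵥ v with hc
  set u : Fin d → ℝ := ext c with hu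
  have hBc : B *ᵥ c = v := by
    rw [hc, mulVec_mulVec, mul_nonsing_inv _ hBunit, one_mulVec]
  have hAT : Aᵀ = A := by
    ext i j
    simpa using congrFun (congrFun hA.1.eq i) j
  have hsym : ∀ p q : Fin d → ℝ, p ⬝ᵥ (A *ᵥ q) = q ⬝ᵥ (A *ᵥ p) := by
    intro p q
    rw [dotProduct_mulVec, ← mulVec_transpose, hAT, dotProduct_comm]
  have h1 : u ⬝ᵥ w = c ⬝ᵥ v := by rw [hu, key]; rfl
  have h2 : u ⬝ᵥ (A *ᵥ u) = c ⬝ᵥ v := by rw [hu, hquad, hBc]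
  have hLHS : v ⬝ᵥ (B⁻¹ *ᵥ v) = c ⬝ᵥ v := by rw [← hc, dotProduct_comm]
  set z : Fin d → ℝ := A⁻¹ *ᵥ w with hz
  have hAz : A *ᵥ z = w := by
    rw [hz, mulVec_mulVec, mul_nonsing_inv _ hAunit, one_mulVec]
  have h0 : (0:ℝ) ≤ (u - z) ⬝ᵥ (A *ᵥ (u - z)) := by
    simpa using hA.posSemidef.dotProduct_mulVec_nonneg (u - z)
  rw [mulVec_sub, sub_dotProduct, dotProduct_sub, dotProduct_sub] at h0
  have e1 : u ⬝ᵥ (A *ᵥ z) = c ⬝ᵥ v := by rw [hAz]; exact h1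
  have e2 : z ⬝ᵥ (A *ᵥ u) = c ⬝ᵥ v := by rw [hsym, hAz]; exact h1
  have e3 : z ⬝ᵥ (A *ᵥ z) = w ⬝ᵥ z := by rw [hAz, dotProduct_comm]
  have hgoal : v ⬝ᵥ (B⁻¹ *ᵥ v) ≤ w ⬝ᵥ z := by
    rw [hLHS]
    linarith [h0, h2, e1, e2, e3]
  exact hgoal
end

section
/- Let Σ be a symmetric positive definite d×d matrix with λ_d(Σ) ≥ a for some 0 < a ≤ 1, and let W ∈ {0,1}^{n×d} be such that every column of W contains at least one entry equal to 1. For row i, write w_i ∈ {0,1}^d and let Σ^{(w_i)} be the principal submatrix of Σ on the set {j : w_{ij} = 1}, with the convention det Σ^{(w_i)} = 1 when w_i is the zero vector. Then ∑_{i=1}^n ln det Σ^{(w_i)} ≥ ln( λ₁(Σ)/d ) + (nd − 1) ln a, where λ₁(Σ) is the largest eigenvalue of Σ. -/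
open Matrix

/-- The largest eigenvalue `λ₁` of a symmetric matrix, as the supremum of the
Rayleigh quotient over unit vectors. -/
noncomputable def lamMax {d : ℕ} (A : Matrix (Fin d) (Fin d) ℝ) : ℝ :=
  sSup {r : ℝ | ∃ v : Fin d → ℝ, v ⬝ᵥ v = 1 ∧ r = v ⬝ᵥ A.mulVec v}

section helpers
variable {d : ℕ}

noncomputable def extv (s : Finset (Fin d)) (v : ↥s → ℝ) : Fin d → ℝ :=
  fun j => if h : j ∈ s then v ⟨j, h⟩ else 0

lemma sum_extv_eq (s : Finset (Fin d)) (f : Fin d → ℝ) (hf : ∀ j ∉ s, f j = 0) :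
    ∑ j, f j = ∑ i : ↥s, f ↑i := by
  rw [Finset.sum_coe_sort s f]
  exact (Finset.sum_subset s.subset_univ (fun x _ hx => hf x hx)).symm

lemma extv_dot (s : Finset (Fin d)) (v : ↥s → ℝ) :
    extv s v ⬝ᵥ extv s v = v ⬝ᵥ v := by
  unfold dotProduct
  rw [sum_extv_eq s _ (fun j hj => by simp [extv, hj])]
  exact Finset.sum_congr rfl fun i _ => by simp [extv]

lemma extv_quad (s : Finset (Fin d)) (A : Matrix (Fin d) (Fin d) ℝ) (v : ↥s → ℝ) :
    extv s v ⬝ᵥ A.mulVec (extv s v)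
      = v ⬝ᵥ (A.submatrix (fun k : ↥s => k.val) (fun k : ↥s => k.val)).mulVec v := by
  unfold dotProduct
  rw [sum_extv_eq s _ (fun j hj => by simp [extv, hj])]
  refine Finset.sum_congr rfl fun i _ => ?_
  have h1 : A.mulVec (extv s v) ↑i
      = (A.submatrix (fun k : ↥s => k.val) (fun k : ↥s => k.val)).mulVec v i := by
    unfold mulVec dotProduct
    rw [sum_extv_eq s _ (fun j hj => by simp [extv, hj])]
    exact Finset.sum_congr rfl fun k _ => by simp [extv]
  rw [h1]; simp [extv]

lemma diag_le_eig_max {ι : Type*} [Fintype ι] [DecidableEq ι] [Nonempty ι]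
    (M : Matrix ι ι ℝ) (hM : M.IsHermitian) (j : ι) :
    ∃ k, M j j ≤ hM.eigenvalues k := by
  obtain ⟨k0, -, hk0⟩ := Finset.exists_max_image Finset.univ hM.eigenvalues
    ⟨Classical.arbitrary ι, Finset.mem_univ _⟩
  refine ⟨k0, ?_⟩
  set U : Matrix ι ι ℝ := (hM.eigenvectorUnitary : Matrix ι ι ℝ) with hU
  have hdiag : M j j = ∑ x, hM.eigenvalues x * (U j x)^2 := by
    conv_lhs => rw [hM.spectral_theorem, Unitary.conjStarAlgAut_apply]
    rw [Matrix.mul_apply]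
    refine Finset.sum_congr rfl fun x _ => ?_
    simp only [Matrix.mul_diagonal, Matrix.star_apply, RCLike.ofReal_real_eq_id,
      Function.comp_apply, id_eq, star_trivial, hU, Matrix.IsHermitian.eigenvectorUnitary_apply]
    ring
  have hrow : ∑ x, (U j x)^2 = 1 := by
    have h1 : U * star U = 1 := (Matrix.mem_unitaryGroup_iff).mp hM.eigenvectorUnitary.2
    have h2 := congrFun (congrFun h1 j) j
    rw [Matrix.mul_apply] at h2
    simp only [Matrix.star_apply, Matrix.one_apply_eq, star_trivial] at h2
    rw [← h2]
    exact Finset.sum_congr rfl fun x _ => by ring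
  calc M j j = ∑ x, hM.eigenvalues x * (U j x)^2 := hdiag
    _ ≤ ∑ x, hM.eigenvalues k0 * (U j x)^2 :=
        Finset.sum_le_sum fun x _ =>
          mul_le_mul_of_nonneg_right (hk0 x (Finset.mem_univ x)) (sq_nonneg _)
    _ = hM.eigenvalues k0 := by rw [← Finset.mul_sum, hrow, mul_one]

lemma eig_lb (A : Matrix (Fin d) (Fin d) ℝ) (hAh : A.IsHermitian)
    (a : ℝ) (hmin : ∀ v : Fin d → ℝ, a * (v ⬝ᵥ v) ≤ v ⬝ᵥ A.mulVec v)
    (s : Finset (Fin d))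
    (hM : (A.submatrix (fun k : ↥s => k.val) (fun k : ↥s => k.val)).IsHermitian) (k : ↥s) :
    a ≤ hM.eigenvalues k := by
  have hmv := hM.mulVec_eigenvectorBasis k
  have hvv : (⇑(hM.eigenvectorBasis k) : ↥s → ℝ) ⬝ᵥ ⇑(hM.eigenvectorBasis k) = 1 := by
    have h1 : ‖hM.eigenvectorBasis k‖ = 1 := hM.eigenvectorBasis.orthonormal.1 k
    have h2 : (inner ℝ (hM.eigenvectorBasis k) (hM.eigenvectorBasis k) : ℝ) = 1 := by
      rw [real_inner_self_eq_norm_sq, h1]; norm_num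
    rw [← h2, PiLp.inner_apply]
    simp [dotProduct, sq]
  have hq : a * ((⇑(hM.eigenvectorBasis k) : ↥s → ℝ) ⬝ᵥ ⇑(hM.eigenvectorBasis k))
      ≤ (⇑(hM.eigenvectorBasis k) : ↥s → ℝ) ⬝ᵥ
        (A.submatrix (fun k : ↥s => k.val) (fun k : ↥s => k.val)).mulVec
          ⇑(hM.eigenvectorBasis k) := by
    rw [← extv_dot s _, ← extv_quad s A _]; exact hmin _
  rw [hvv, mul_one, show (A.submatrix (fun k : ↥s => k.val) (fun k : ↥s => k.val)).mulVec
      ⇑(hM.eigenvectorBasis k) = _ from hmv, dotProduct_smul, hvv, smul_eq_mul, mul_one] at hq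
  exact hq


lemma log_det_eq (A : Matrix (Fin d) (Fin d) ℝ) (s : Finset (Fin d))
    (hM : (A.submatrix (fun k : ↥s => k.val) (fun k : ↥s => k.val)).IsHermitian)
    (a : ℝ) (ha0 : 0 < a) (hlb : ∀ k, a ≤ hM.eigenvalues k) :
    Real.log ((A.submatrix (fun k : ↥s => k.val) (fun k : ↥s => k.val)).det)
      = ∑ k, Real.log (hM.eigenvalues k) := by
  have hdet : (A.submatrix (fun k : ↥s => k.val) (fun k : ↥s => k.val)).det
      = ∏ k, hM.eigenvalues k := by simpa using hM.det_eq_prod_eigenvalues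
  rw [hdet]
  exact Real.log_prod fun k _ => ne_of_gt (lt_of_lt_of_le ha0 (hlb k))

lemma logdet_ge_card (A : Matrix (Fin d) (Fin d) ℝ) (hAh : A.IsHermitian)
    (a : ℝ) (ha0 : 0 < a)
    (hmin : ∀ v : Fin d → ℝ, a * (v ⬝ᵥ v) ≤ v ⬝ᵥ A.mulVec v) (s : Finset (Fin d)) :
    (s.card : ℝ) * Real.log a
      ≤ Real.log ((A.submatrix (fun k : ↥s => k.val) (fun k : ↥s => k.val)).det) := by
  have hM := hAh.submatrix (fun k : ↥s => k.val)
  have hlb : ∀ k, a ≤ hM.eigenvalues k := eig_lb A hAh a hmin s hM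
  rw [log_det_eq A s hM a ha0 hlb]
  calc (s.card : ℝ) * Real.log a = ∑ _k : ↥s, Real.log a := by
        rw [Finset.sum_const, Finset.card_univ, Fintype.card_coe, nsmul_eq_mul]
    _ ≤ ∑ k, Real.log (hM.eigenvalues k) :=
        Finset.sum_le_sum fun k _ => Real.log_le_log ha0 (hlb k)

lemma logdet_ge_special (A : Matrix (Fin d) (Fin d) ℝ) (hAh : A.IsHermitian)
    (a : ℝ) (ha0 : 0 < a)
    (hmin : ∀ v : Fin d → ℝ, a * (v ⬝ᵥ v) ≤ v ⬝ᵥ A.mulVec v) (s : Finset (Fin d))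
    (j : Fin d) (hj : j ∈ s) :
    Real.log (A j j) + ((s.card : ℝ) - 1) * Real.log a
      ≤ Real.log ((A.submatrix (fun k : ↥s => k.val) (fun k : ↥s => k.val)).det) := by
  have : Nonempty ↥s := ⟨⟨j, hj⟩⟩
  have hM := hAh.submatrix (fun k : ↥s => k.val)
  have hlb : ∀ k, a ≤ hM.eigenvalues k := eig_lb A hAh a hmin s hM
  have hAjj : a ≤ A j j := by
    have h := hmin (Pi.single j 1)
    simpa [dotProduct, mulVec, Pi.single_apply] using h
  obtain ⟨k0, hk0⟩ := diag_le_eig_max _ hM ⟨j, hj⟩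
  have hk0' : A j j ≤ hM.eigenvalues k0 := by simpa using hk0
  rw [log_det_eq A s hM a ha0 hlb,
    ← Finset.add_sum_erase Finset.univ _ (Finset.mem_univ k0)]
  have h1 : Real.log (A j j) ≤ Real.log (hM.eigenvalues k0) :=
    Real.log_le_log (lt_of_lt_of_le ha0 hAjj) hk0'
  have hcard : (Finset.univ.erase k0).card = s.card - 1 := by
    rw [Finset.card_erase_of_mem (Finset.mem_univ k0), Finset.card_univ, Fintype.card_coe]
  have hs1 : 1 ≤ s.card := Finset.card_pos.mpr ⟨j, hj⟩
  have h2 : ((s.card : ℝ) - 1) * Real.log a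
      ≤ ∑ k ∈ Finset.univ.erase k0, Real.log (hM.eigenvalues k) := by
    calc ((s.card : ℝ) - 1) * Real.log a
        = ∑ _k ∈ Finset.univ.erase k0, Real.log a := by
          rw [Finset.sum_const, nsmul_eq_mul, hcard]
          congr 1
          push_cast [Nat.cast_sub hs1]
          ring
      _ ≤ _ := Finset.sum_le_sum fun k _ => Real.log_le_log ha0 (hlb k)
  linarith


lemma quad_expand (A : Matrix (Fin d) (Fin d) ℝ) (hAh : A.IsHermitian) (t : ℝ) (j k : Fin d) :
    (fun i => t * (if i = j then (1:ℝ) else 0) + (if i = k then 1 else 0)) ⬝ᵥ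
      A.mulVec (fun i => t * (if i = j then (1:ℝ) else 0) + (if i = k then 1 else 0))
      = t^2 * A j j + t * A j k + t * A j k + A k k := by
  have hsym : A k j = A j k := by
    have := congrFun (congrFun hAh j) k
    simpa using this
  have hin : ∀ p, A.mulVec (fun i => t * (if i = j then (1:ℝ) else 0) + (if i = k then 1 else 0)) p
      = t * A p j + A p k := by
    intro p
    simp [mulVec, dotProduct, mul_add, mul_ite, mul_one, mul_zero, Finset.sum_add_distrib,
      Finset.mul_sum, mul_comm]
  simp only [dotProduct, hin]
  simp [add_mul, mul_add, Finset.sum_add_distrib, ite_mul, one_mul, zero_mul, hsym]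
  ring


lemma entry_sq (A : Matrix (Fin d) (Fin d) ℝ) (hAh : A.IsHermitian)
    (hpsd : ∀ v : Fin d → ℝ, 0 ≤ v ⬝ᵥ A.mulVec v) (j k : Fin d) :
    (A j k)^2 ≤ A j j * A k k := by
  have h : ∀ t : ℝ, 0 ≤ A j j * (t * t) + (2 * A j k) * t + A k k := fun t => by
    have h0 := hpsd (fun i => t * (if i = j then (1:ℝ) else 0) + (if i = k then 1 else 0))
    rw [quad_expand A hAh t j k] at h0
    nlinarith
  have hle : (2 * A j k)^2 - 4 * (A j j) * (A k k) ≤ 0 := by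
    simpa [discrim] using discrim_le_zero h
  nlinarith

lemma rq_le (A : Matrix (Fin d) (Fin d) ℝ) (hAh : A.IsHermitian)
    (hpsd : ∀ v : Fin d → ℝ, 0 ≤ v ⬝ᵥ A.mulVec v) (js : Fin d)
    (hjs : ∀ j, A j j ≤ A js js) (v : Fin d → ℝ) (hv : v ⬝ᵥ v = 1) :
    v ⬝ᵥ A.mulVec v ≤ d * A js js := by
  have hd0 : ∀ p : Fin d, 0 ≤ A p p := fun p => by
    have h0 := hpsd (fun i => (0:ℝ) * (if i = p then (1:ℝ) else 0) + (if i = p then 1 else 0))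
    rw [quad_expand A hAh 0 p p] at h0
    nlinarith
  have hjs0 : 0 ≤ A js js := hd0 js
  have hentry : ∀ p q, |A p q| ≤ A js js := by
    intro p q
    have h1 := entry_sq A hAh hpsd p q
    have h2 : A p p ≤ A js js := hjs p
    have h3 : A q q ≤ A js js := hjs q
    refine abs_le.mpr ⟨?_, ?_⟩ <;> nlinarith [hd0 p, hd0 q]
  calc v ⬝ᵥ A.mulVec v = ∑ p, ∑ q, v p * A p q * v q := by
        simp only [dotProduct, mulVec, Finset.mul_sum]
        exact Finset.sum_congr rfl fun p _ => Finset.sum_congr rfl fun q _ => by ring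
    _ ≤ ∑ p, ∑ q, |v p| * A js js * |v q| := by
        refine Finset.sum_le_sum fun p _ => Finset.sum_le_sum fun q _ => ?_
        calc v p * A p q * v q ≤ |v p * A p q * v q| := le_abs_self _
          _ = |v p| * |A p q| * |v q| := by rw [abs_mul, abs_mul]
          _ ≤ |v p| * A js js * |v q| := by
              have := hentry p q
              have h1 : |v p| * |A p q| ≤ |v p| * A js js :=
                mul_le_mul_of_nonneg_left this (abs_nonneg _)
              exact mul_le_mul_of_nonneg_right h1 (abs_nonneg _)
    _ = ∑ p, (|v p| * A js js) * (∑ q, |v q|) :=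
        Finset.sum_congr rfl fun p _ => (Finset.mul_sum _ _ _).symm
    _ = (∑ p, |v p|) ^ 2 * A js js := by
        rw [← Finset.sum_mul, ← Finset.sum_mul]
        ring
    _ ≤ ((d : ℝ) * ∑ p, |v p| ^ 2) * A js js := by
        refine mul_le_mul_of_nonneg_right ?_ hjs0
        have := sq_sum_le_card_mul_sum_sq (s := (Finset.univ : Finset (Fin d)))
          (f := fun p => |v p|)
        simpa using this
    _ = (d : ℝ) * A js js := by
        have : ∑ p, |v p| ^ 2 = 1 := by
          rw [← hv]
          simp only [dotProduct, sq_abs]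
          exact Finset.sum_congr rfl fun p _ => (sq (v p)) ▸ by rw [sq]
        rw [this, mul_one]

end helpers

/-- Let `A` be symmetric positive definite with smallest eigenvalue at least
`a ∈ (0,1]` (Rayleigh-quotient form), and let `W` select for each row `i` a subset
`W i` of the columns (the cells with weight 1), such that every column is selected
in at least one row.  Then the sum over the rows of the log-determinants of the
corresponding principal submatrices of `A` is at least
`ln(λ₁(A)/d) + (nd − 1) ln a`.  (For an empty `W i` the submatrix is the empty
matrix, whose determinant is `1` by convention.) -/
theorem stmt_9 {n d : ℕ} (hd : 0 < d)
    (A : Matrix (Fin d) (Fin d) ℝ) (hA : A.PosDef)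
    (a : ℝ) (ha0 : 0 < a) (ha1 : a ≤ 1)
    (hmin : ∀ v : Fin d → ℝ, a * (v ⬝ᵥ v) ≤ v ⬝ᵥ A.mulVec v)
    (W : Fin n → Finset (Fin d))
    (hW : ∀ j : Fin d, ∃ i : Fin n, j ∈ W i) :
    Real.log (lamMax A / d) + ((n : ℝ) * d - 1) * Real.log a
      ≤ ∑ i, Real.log
          (A.submatrix (fun k : ↥(W i) => k.val) (fun k : ↥(W i) => k.val)).det := by
  have hAh : A.IsHermitian := hA.1
  have hdotself : ∀ v : Fin d → ℝ, 0 ≤ v ⬝ᵥ v := fun v =>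
    Finset.sum_nonneg fun i _ => mul_self_nonneg (v i)
  have hpsd : ∀ v : Fin d → ℝ, 0 ≤ v ⬝ᵥ A.mulVec v := fun v =>
    le_trans (mul_nonneg ha0.le (hdotself v)) (hmin v)
  -- the diagonal maximizer
  obtain ⟨js, -, hjs'⟩ := Finset.exists_max_image Finset.univ (fun j => A j j)
    ⟨⟨0, hd⟩, Finset.mem_univ _⟩
  have hjs : ∀ j, A j j ≤ A js js := fun j => hjs' j (Finset.mem_univ j)
  have hajj : a ≤ A js js := by
    have h := hmin (Pi.single js 1)
    simpa [dotProduct, mulVec, Pi.single_apply] using h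
  have hjj0 : 0 < A js js := lt_of_lt_of_le ha0 hajj
  have hdR : (0:ℝ) < d := by exact_mod_cast hd
  -- lamMax bounds
  have hsup_le : lamMax A ≤ d * A js js := by
    refine Real.sSup_le ?_ (by positivity)
    rintro r ⟨v, hv1, rfl⟩
    exact rq_le A hAh hpsd js hjs v hv1
  have hbdd : BddAbove {r : ℝ | ∃ v : Fin d → ℝ, v ⬝ᵥ v = 1 ∧ r = v ⬝ᵥ A.mulVec v} := by
    refine ⟨d * A js js, ?_⟩
    rintro r ⟨v, hv1, rfl⟩
    exact rq_le A hAh hpsd js hjs v hv1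
  have hsup_ge : a ≤ lamMax A := by
    have hmem : A js js ∈ {r : ℝ | ∃ v : Fin d → ℝ, v ⬝ᵥ v = 1 ∧ r = v ⬝ᵥ A.mulVec v} := by
      refine ⟨Pi.single js 1, ?_, ?_⟩
      · simp [dotProduct, Pi.single_apply]
      · simp [dotProduct, mulVec, Pi.single_apply]
    exact le_trans hajj (le_csSup hbdd hmem)
  have hlam_pos : 0 < lamMax A / d := div_pos (lt_of_lt_of_le ha0 hsup_ge) hdR
  have hlam_div : lamMax A / d ≤ A js js := by
    rw [div_le_iff₀ hdR]
    linarith [hsup_le]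
  have hlogdiv : Real.log (lamMax A / d) ≤ Real.log (A js js) :=
    Real.log_le_log hlam_pos hlam_div
  have hloga : Real.log a ≤ 0 := Real.log_nonpos ha0.le ha1
  -- the special row
  obtain ⟨i0, hi0⟩ := hW js
  have hn1 : 1 ≤ n := Nat.pos_of_ne_zero (by rintro rfl; exact i0.elim0)
  -- split the sum
  set f : Fin n → ℝ := fun i => Real.log
      (A.submatrix (fun k : ↥(W i) => k.val) (fun k : ↥(W i) => k.val)).det with hf
  rw [← Finset.add_sum_erase Finset.univ f (Finset.mem_univ i0)]
  have hcardle : ∀ i, (W i).card ≤ d := fun i => by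
    simpa using Finset.card_le_univ (W i)
  have hspecial : Real.log (lamMax A / d) + ((d:ℝ) - 1) * Real.log a ≤ f i0 := by
    have h1 := logdet_ge_special A hAh a ha0 hmin (W i0) js hi0
    have h2 : ((d:ℝ) - 1) * Real.log a ≤ (((W i0).card : ℝ) - 1) * Real.log a := by
      have : ((W i0).card : ℝ) ≤ (d:ℝ) := by exact_mod_cast hcardle i0
      nlinarith
    calc Real.log (lamMax A / d) + ((d:ℝ) - 1) * Real.log a
        ≤ Real.log (A js js) + (((W i0).card : ℝ) - 1) * Real.log a := by linarith
      _ ≤ f i0 := h1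
  have hrest : ((n:ℝ) - 1) * ((d:ℝ) * Real.log a) ≤ ∑ i ∈ Finset.univ.erase i0, f i := by
    have hterm : ∀ i ∈ Finset.univ.erase i0, (d:ℝ) * Real.log a ≤ f i := by
      intro i _
      have h1 := logdet_ge_card A hAh a ha0 hmin (W i)
      have h2 : (d:ℝ) * Real.log a ≤ ((W i).card : ℝ) * Real.log a := by
        have : ((W i).card : ℝ) ≤ (d:ℝ) := by exact_mod_cast hcardle i
        nlinarith
      linarith
    calc ((n:ℝ) - 1) * ((d:ℝ) * Real.log a)
        = ∑ _i ∈ Finset.univ.erase i0, (d:ℝ) * Real.log a := by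
          rw [Finset.sum_const, nsmul_eq_mul, Finset.card_erase_of_mem (Finset.mem_univ i0),
            Finset.card_univ, Fintype.card_fin]
          push_cast [Nat.cast_sub hn1]
          ring
      _ ≤ _ := Finset.sum_le_sum hterm
  have hnR : (1:ℝ) ≤ (n:ℝ) := by exact_mod_cast hn1
  have hdR1 : (1:ℝ) ≤ (d:ℝ) := by exact_mod_cast hd
  have harith : ((n:ℝ) * d - 1) * Real.log a
      = ((d:ℝ) - 1) * Real.log a + ((n:ℝ) - 1) * ((d:ℝ) * Real.log a) := by ring
  linarith
end

section
/- Fix penalties q ∈ ℝ^d, μ ∈ ℝ^d, and a symmetric positive definite d×d matrix Σ, and define ℓ_w and g_{μ,Σ} as below. Suppose there exists δ > 0 such that for every x with ‖x − μ‖ < δ, the minimum in g_{μ,Σ}(x) = min_{w ∈ {0,1}^d} ℓ_w(x, μ, Σ) is attained only at the all-ones vector w = (1,…,1). Then x = μ is the unique minimizer of g_{μ,Σ} over ℝ^d: g_{μ,Σ}(μ) < g_{μ,Σ}(x) for every x ≠ μ. -/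
open Matrix

/-- The principal submatrix of `A` with rows and columns in the set `w`. -/
def cellSub {d : ℕ} (A : Matrix (Fin d) (Fin d) ℝ) (w : Finset (Fin d)) :
    Matrix ↥w ↥w ℝ :=
  A.submatrix (fun i => i.val) (fun i => i.val)

/-- `ℓ_w(x, μ, Σ) = ln det Σ^{(w)} + d^{(w)} ln(2π) + MD²(x, w, μ, Σ) + ∑_j q_j (1 − w_j)`,
where `w` is identified with the subset `{j : w_j = 1}` of the coordinates.
For empty `w` the determinant of the empty submatrix is `1` and the partial
Mahalanobis distance is `0`, matching the stated conventions. -/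
noncomputable def cellL {d : ℕ} (q : Fin d → ℝ) (x μ : Fin d → ℝ)
    (A : Matrix (Fin d) (Fin d) ℝ) (w : Finset (Fin d)) : ℝ :=
  Real.log (cellSub A w).det + (w.card : ℝ) * Real.log (2 * Real.pi)
    + (fun i : ↥w => x i.val - μ i.val) ⬝ᵥ
        ((cellSub A w)⁻¹).mulVec (fun i : ↥w => x i.val - μ i.val)
    + ∑ j ∈ wᶜ, q j

/-- `g_{μ,Σ}(x) = min_{w ∈ {0,1}^d} ℓ_w(x, μ, Σ)`. -/
noncomputable def cellG {d : ℕ} (q : Fin d → ℝ) (μ : Fin d → ℝ)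
    (A : Matrix (Fin d) (Fin d) ℝ) (x : Fin d → ℝ) : ℝ :=
  ⨅ w : Finset (Fin d), cellL q x μ A w

lemma quad_sub {d : ℕ} (A : Matrix (Fin d) (Fin d) ℝ) (w : Finset (Fin d)) (v : ↥w → ℝ) :
    v ⬝ᵥ (cellSub A w) *ᵥ v
      = (fun j => if h : j ∈ w then v ⟨j, h⟩ else 0) ⬝ᵥ
          A *ᵥ (fun j => if h : j ∈ w then v ⟨j, h⟩ else 0) := by
  classical
  set u : Fin d → ℝ := fun j => if h : j ∈ w then v ⟨j, h⟩ else 0 with hu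
  have hu0 : ∀ j ∉ w, u j = 0 := fun j hj => dif_neg hj
  have huval : ∀ j : ↥w, u j.val = v j := fun j => dif_pos j.2
  have hmul : ∀ jv : Fin d, (A *ᵥ u) jv = ∑ k : ↥w, A jv k.val * v k := by
    intro jv
    show ∑ k : Fin d, A jv k * u k = _
    rw [← Finset.sum_subset (Finset.subset_univ w)
      (fun k _ hk => by rw [hu0 k hk, mul_zero]),
      ← Finset.sum_attach w (fun k => A jv k * u k), Finset.univ_eq_attach]
    exact Finset.sum_congr rfl fun k _ => by rw [huval]
  show ∑ j : ↥w, v j * ((cellSub A w) *ᵥ v) j = ∑ j : Fin d, u j * (A *ᵥ u) j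
  rw [← Finset.sum_subset (Finset.subset_univ w)
    (fun j _ hj => by rw [hu0 j hj, zero_mul]),
    ← Finset.sum_attach w (fun j => u j * (A *ᵥ u) j), Finset.univ_eq_attach]
  refine Finset.sum_congr rfl fun j _ => ?_
  rw [huval, hmul]
  congr 1

lemma cellSub_posDef {d : ℕ} {A : Matrix (Fin d) (Fin d) ℝ} (hA : A.PosDef)
    (w : Finset (Fin d)) : (cellSub A w).PosDef := by
  classical
  refine posDef_iff_dotProduct_mulVec.mpr ⟨hA.1.submatrix _, fun v hv => ?_⟩
  have hs : star v = v := by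
    funext i; simp
  rw [hs, quad_sub]
  set u : Fin d → ℝ := fun j => if h : j ∈ w then v ⟨j, h⟩ else 0 with hu
  have hune : u ≠ 0 := by
    intro h0
    apply hv
    funext i
    have := congrFun h0 i.val
    simpa [hu, i.2] using this
  have := hA.dotProduct_mulVec_pos hune
  have hsu : star u = u := by funext i; simp
  rwa [hsu] at this

lemma cellL_decomp {d : ℕ} (q : Fin d → ℝ) (x μ : Fin d → ℝ)
    (A : Matrix (Fin d) (Fin d) ℝ) (w : Finset (Fin d)) :
    cellL q x μ A w = cellL q μ μ A w
      + (fun i : ↥w => x i.val - μ i.val) ⬝ᵥ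
          ((cellSub A w)⁻¹) *ᵥ (fun i : ↥w => x i.val - μ i.val) := by
  unfold cellL
  have h0 : (fun i : ↥w => μ i.val - μ i.val) ⬝ᵥ
      ((cellSub A w)⁻¹) *ᵥ (fun i : ↥w => μ i.val - μ i.val) = 0 := by
    simp [dotProduct, sub_self]
  rw [h0]
  ring

/-- If there is `δ > 0` such that for every `x` with `‖x − μ‖ < δ` the minimum in
`g_{μ,Σ}(x) = min_w ℓ_w(x, μ, Σ)` is attained only at the all-ones weight vector
(i.e. `ℓ_univ < ℓ_w` for every `w ≠ univ`), then `x = μ` is the unique minimizer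
of `g_{μ,Σ}`. -/
theorem stmt_14 {d : ℕ} (q : Fin d → ℝ) (μ : Fin d → ℝ)
    (A : Matrix (Fin d) (Fin d) ℝ) (hA : A.PosDef)
    (δ : ℝ) (hδ : 0 < δ)
    (hattain : ∀ x : Fin d → ℝ, ‖x - μ‖ < δ →
      ∀ w : Finset (Fin d), w ≠ Finset.univ →
        cellL q x μ A Finset.univ < cellL q x μ A w) :
    ∀ x : Fin d → ℝ, x ≠ μ → cellG q μ A μ < cellG q μ A x := by
  classical
  intro x hx
  have hmin := hattain μ (by simpa using hδ)
  have hbdd : ∀ y : Fin d → ℝ,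
      BddBelow (Set.range fun w : Finset (Fin d) => cellL q y μ A w) :=
    fun y => (Set.finite_range _).bddBelow
  have hgμ : cellG q μ A μ = cellL q μ μ A Finset.univ := by
    refine le_antisymm (ciInf_le (hbdd μ) _) (le_ciInf fun w => ?_)
    by_cases h : w = Finset.univ
    · subst h; exact le_rfl
    · exact (hmin w h).le
  obtain ⟨w₀, -, hw₀⟩ := Finset.exists_min_image Finset.univ
    (fun w : Finset (Fin d) => cellL q x μ A w) ⟨Finset.univ, Finset.mem_univ _⟩
  have hgx : cellL q x μ A w₀ ≤ cellG q μ A x :=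
    le_ciInf fun w => hw₀ w (Finset.mem_univ w)
  rw [hgμ]
  refine lt_of_lt_of_le ?_ hgx
  by_cases hw : w₀ = Finset.univ
  · subst hw
    rw [cellL_decomp q x μ A Finset.univ]
    have hInv := (cellSub_posDef hA Finset.univ).inv
    set v : ↥(Finset.univ : Finset (Fin d)) → ℝ := fun i => x i.val - μ i.val with hv
    have hvne : v ≠ 0 := by
      intro h0
      apply hx
      funext j
      have := congrFun h0 ⟨j, Finset.mem_univ j⟩
      simpa [hv, sub_eq_zero] using this
    have hpos := hInv.dotProduct_mulVec_pos hvne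
    have hs : star v = v := by funext i; simp
    rw [hs] at hpos
    linarith
  · have h1 : cellL q μ μ A Finset.univ < cellL q μ μ A w₀ := hmin w₀ hw
    have h2 : cellL q μ μ A w₀ ≤ cellL q x μ A w₀ := by
      rw [cellL_decomp q x μ A w₀]
      have hnn := (cellSub_posDef hA w₀).inv.posSemidef.dotProduct_mulVec_nonneg
        (fun i : ↥w₀ => x i.val - μ i.val)
      have hs : star (fun i : ↥w₀ => x i.val - μ i.val)
          = (fun i : ↥w₀ => x i.val - μ i.val) := by funext i; simp
      rw [hs] at hnn
      linarith
    linarith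
end

section
/- Fix penalties q ∈ ℝ^d, μ ∈ ℝ^d, and a symmetric positive definite d×d matrix Σ, and define g_{μ,Σ} as below. Then (i) g_{μ,Σ} is point symmetric around μ: g_{μ,Σ}(μ + u) = g_{μ,Σ}(μ − u) for all u ∈ ℝ^d; and (ii) for every unit vector v ∈ ℝ^d, the function t ↦ g_{μ,Σ}(μ + t v) is weakly monotone increasing on [0, ∞). -/
open Matrix

lemma cellL_quad {d : ℕ} (q : Fin d → ℝ) (μ u : Fin d → ℝ)
    (A : Matrix (Fin d) (Fin d) ℝ) (w : Finset (Fin d)) :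
    cellL q (μ + u) μ A w =
      Real.log (cellSub A w).det + (w.card : ℝ) * Real.log (2 * Real.pi)
        + (fun i : ↥w => u i.val) ⬝ᵥ
            ((cellSub A w)⁻¹).mulVec (fun i : ↥w => u i.val)
        + ∑ j ∈ wᶜ, q j := by
  simp [cellL]

/-- (i) `g_{μ,Σ}` is point symmetric around `μ`; (ii) along every unit direction
`v`, the function `t ↦ g_{μ,Σ}(μ + t v)` is weakly monotone increasing on `[0, ∞)`. -/
theorem stmt_15 {d : ℕ} (q : Fin d → ℝ) (μ : Fin d → ℝ)
    (A : Matrix (Fin d) (Fin d) ℝ) (hA : A.PosDef) :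
    (∀ u : Fin d → ℝ, cellG q μ A (μ + u) = cellG q μ A (μ - u)) ∧
    (∀ v : Fin d → ℝ, v ⬝ᵥ v = 1 →
      MonotoneOn (fun t : ℝ => cellG q μ A (μ + t • v)) (Set.Ici 0)) := by
  constructor
  · intro u
    unfold cellG
    apply iInf_congr
    intro w
    have : μ - u = μ + (-u) := by ring_nf
    rw [this, cellL_quad, cellL_quad]
    have : (fun i : ↥w => (-u) i.val) = -(fun i : ↥w => u i.val) := by
      funext i; simp
    rw [this]
    simp [mulVec_neg]
  · intro v hv
    intro s hs t ht hst
    simp only [Set.mem_Ici] at hs ht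
    unfold cellG
    apply ciInf_mono
    · exact (Set.finite_range _).bddBelow
    · intro w
      rw [cellL_quad, cellL_quad]
      have hc : ∀ r : ℝ, (fun i : ↥w => (r • v) i.val) = r • (fun i : ↥w => v i.val) := by
        intro r; funext i; simp
      rw [hc, hc]
      set a : ↥w → ℝ := fun i => v i.val
      have hq : ∀ r : ℝ, (r • a) ⬝ᵥ ((cellSub A w)⁻¹) *ᵥ (r • a)
          = r ^ 2 * (a ⬝ᵥ ((cellSub A w)⁻¹) *ᵥ a) := by
        intro r
        rw [smul_dotProduct, mulVec_smul, dotProduct_smul]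
        simp [smul_eq_mul]; ring
      rw [hq, hq]
      have ha : 0 ≤ a ⬝ᵥ ((cellSub A w)⁻¹) *ᵥ a := by
        have := ((cellSub_posDef hA w).inv.posSemidef).dotProduct_mulVec_nonneg a
        simpa using this
      have : s ^ 2 ≤ t ^ 2 := by nlinarith
      nlinarith
end

section
/- Fix penalties q ∈ ℝ^d with q_j ≥ 0 for all j, and fix 0 < a ≤ 1. Then for every x, μ ∈ ℝ^d and every symmetric positive definite d×d matrix Σ whose smallest eigenvalue satisfies λ_d(Σ) ≥ a, one has d · ln a ≤ g_{μ,Σ}(x) ≤ ∑_{j=1}^d q_j. -/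
open Matrix

noncomputable def cellExt {d : ℕ} (w : Finset (Fin d)) (v : ↥w → ℝ) : Fin d → ℝ :=
  fun j => if h : j ∈ w then v ⟨j, h⟩ else 0

lemma cellExt_sum {d : ℕ} (w : Finset (Fin d)) (f : ↥w → ℝ) :
    ∑ j : Fin d, (if h : j ∈ w then f ⟨j, h⟩ else 0) = ∑ i : ↥w, f i := by
  rw [← Finset.sum_subset (Finset.subset_univ w)
    (by intro j _ hj; rw [dif_neg hj])]
  rw [Finset.sum_dite_of_true (fun i hi => hi)]

lemma cellExt_dot {d : ℕ} (w : Finset (Fin d)) (A : Matrix (Fin d) (Fin d) ℝ) (v : ↥w → ℝ) :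
    cellExt w v ⬝ᵥ A.mulVec (cellExt w v) = v ⬝ᵥ (cellSub A w).mulVec v := by
  unfold cellExt cellSub
  simp only [dotProduct, mulVec, dotProduct, submatrix_apply]
  rw [← cellExt_sum w (fun i => v i * ∑ k : ↥w, A i.val k.val * v k)]
  apply Finset.sum_congr rfl
  intro j _
  by_cases hj : j ∈ w
  · rw [dif_pos hj, dif_pos hj]
    congr 1
    rw [← cellExt_sum w (fun k => A j k.val * v k)]
    apply Finset.sum_congr rfl
    intro k _
    by_cases hk : k ∈ w
    · rw [dif_pos hk, dif_pos hk]
    · rw [dif_neg hk, dif_neg hk, mul_zero]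
  · rw [dif_neg hj, dif_neg hj, zero_mul]

lemma cellExt_dot_self {d : ℕ} (w : Finset (Fin d)) (v : ↥w → ℝ) :
    cellExt w v ⬝ᵥ cellExt w v = v ⬝ᵥ v := by
  unfold cellExt
  simp only [dotProduct]
  rw [← cellExt_sum w (fun i => v i * v i)]
  apply Finset.sum_congr rfl
  intro j _
  by_cases hj : j ∈ w
  · rw [dif_pos hj, dif_pos hj]
  · rw [dif_neg hj, dif_neg hj, zero_mul]

lemma det_ge_pow {n : Type*} [Fintype n] [DecidableEq n] {B : Matrix n n ℝ} (hB : B.PosDef)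
    {a : ℝ} (ha0 : 0 < a)
    (hray : ∀ v : n → ℝ, a * (v ⬝ᵥ v) ≤ v ⬝ᵥ B.mulVec v) :
    a ^ (Fintype.card n) ≤ B.det := by
  have hev : ∀ i, a ≤ hB.1.eigenvalues i := by
    intro i
    have he := hB.1.eigenvalues_eq i
    set v : n → ℝ := ⇑(hB.1.eigenvectorBasis i) with hv
    have hnorm : ‖hB.1.eigenvectorBasis i‖ = 1 := hB.1.eigenvectorBasis.orthonormal.1 i
    have hdot : v ⬝ᵥ v = 1 := by
      have h2 : (inner ℝ (hB.1.eigenvectorBasis i) (hB.1.eigenvectorBasis i) : ℝ) = 1 := by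
        rw [real_inner_self_eq_norm_sq, hnorm]; norm_num
      rw [EuclideanSpace.inner_eq_star_dotProduct] at h2
      simpa [dotProduct, mul_comm] using h2
    have := hray v
    rw [hdot, mul_one] at this
    rw [he]
    simpa [star_trivial, mulVec] using this
  have : B.det = ∏ i, hB.1.eigenvalues i := by
    have := hB.1.det_eq_prod_eigenvalues
    simpa using this
  rw [this]
  calc a ^ (Fintype.card n) = ∏ _i : n, a := by rw [Finset.prod_const, Finset.card_univ]
  _ ≤ ∏ i, hB.1.eigenvalues i :=
      Finset.prod_le_prod (fun _ _ => le_of_lt ha0) (fun i _ => hev i)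

/-- For nonnegative penalties `q`, `0 < a ≤ 1`, and any symmetric positive definite
`Σ` whose smallest eigenvalue is at least `a` (Rayleigh-quotient form), the function
`g_{μ,Σ}` is uniformly bounded: `d ln a ≤ g_{μ,Σ}(x) ≤ ∑_j q_j`. -/
theorem stmt_16 {d : ℕ} (q : Fin d → ℝ) (hq : ∀ j, 0 ≤ q j)
    (a : ℝ) (ha0 : 0 < a) (ha1 : a ≤ 1)
    (x μ : Fin d → ℝ) (A : Matrix (Fin d) (Fin d) ℝ) (hA : A.PosDef)
    (hmin : ∀ v : Fin d → ℝ, a * (v ⬝ᵥ v) ≤ v ⬝ᵥ A.mulVec v) :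
    (d : ℝ) * Real.log a ≤ cellG q μ A x ∧ cellG q μ A x ≤ ∑ j, q j := by
  classical
  constructor
  · -- lower bound
    apply le_ciInf
    intro w
    have hB : (cellSub A w).PosDef := cellSub_posDef hA w
    have hrayB : ∀ v : ↥w → ℝ, a * (v ⬝ᵥ v) ≤ v ⬝ᵥ (cellSub A w).mulVec v := by
      intro v
      have := hmin (cellExt w v)
      rwa [cellExt_dot_self, cellExt_dot] at this
    have hdet : a ^ (w.card) ≤ (cellSub A w).det := by
      have := det_ge_pow hB ha0 hrayB
      rwa [Fintype.card_coe] at this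
    have hlog : (w.card : ℝ) * Real.log a ≤ Real.log (cellSub A w).det := by
      have h1 : Real.log (a ^ w.card) ≤ Real.log (cellSub A w).det :=
        Real.log_le_log (pow_pos ha0 _) hdet
      rwa [Real.log_pow] at h1
    have hloga : Real.log a ≤ 0 := Real.log_nonpos ha0.le ha1
    have hcard : (w.card : ℝ) ≤ (d : ℝ) := by
      exact_mod_cast (Finset.card_le_univ w).trans_eq (by simp)
    have hlow : (d : ℝ) * Real.log a ≤ (w.card : ℝ) * Real.log a :=
      mul_le_mul_of_nonpos_right hcard hloga
    have h2pi : 0 ≤ (w.card : ℝ) * Real.log (2 * Real.pi) := by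
      apply mul_nonneg (Nat.cast_nonneg _)
      apply Real.log_nonneg
      nlinarith [Real.pi_gt_three]
    have hmah : 0 ≤ (fun i : ↥w => x i.val - μ i.val) ⬝ᵥ
        ((cellSub A w)⁻¹).mulVec (fun i : ↥w => x i.val - μ i.val) := by
      have := (hB.inv).posSemidef.re_dotProduct_nonneg (fun i : ↥w => x i.val - μ i.val)
      simpa using this
    have hqs : 0 ≤ ∑ j ∈ wᶜ, q j := Finset.sum_nonneg fun j _ => hq j
    unfold cellL
    have := hlow.trans hlog
    linarith
  · -- upper bound: take w = ∅
    have hb : BddBelow (Set.range fun w : Finset (Fin d) => cellL q x μ A w) :=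
      (Set.finite_range _).bddBelow
    have h := ciInf_le hb (∅ : Finset (Fin d))
    apply h.trans_eq
    unfold cellL
    simp [dotProduct]
end

section
/- Fix penalties q ∈ ℝ^d with q_j ≥ 0 for all j, fix 0 < a ≤ 1, and let F be a probability measure on ℝ^d. Define G(μ, Σ, F) = ∫_{ℝ^d} g_{μ,Σ}(x) dF(x). Then the map (μ, Σ) ↦ G(μ, Σ, F) is continuous on ℝ^d × 𝒫_a(d), where 𝒫_a(d) is the set of symmetric positive definite d×d matrices with smallest eigenvalue at least a, equipped with the subspace topology of the space of d×d real matrices. -/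
open Matrix

open MeasureTheory

section Aux

variable {d : ℕ}

/-- Extension of a vector on `↥w` by zero. -/
def extVec {w : Finset (Fin d)} (v : ↥w → ℝ) : Fin d → ℝ :=
  fun j => if h : j ∈ w then v ⟨j, h⟩ else 0

lemma extVec_dot {w : Finset (Fin d)} (v : ↥w → ℝ) (z : Fin d → ℝ) :
    extVec v ⬝ᵥ z = ∑ i : ↥w, v i * z i.val := by
  classical
  have h1 : ∑ i ∈ w, extVec v i * z i = ∑ i : Fin d, extVec v i * z i :=
    Finset.sum_subset (Finset.subset_univ w)
      (fun i _ hi => by simp [extVec, dif_neg hi])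
  rw [dotProduct, ← h1, ← Finset.sum_coe_sort w (fun i => extVec v i * z i)]
  exact Finset.sum_congr rfl fun i _ => by simp [extVec, i.2]

lemma extVec_dot_self {w : Finset (Fin d)} (v : ↥w → ℝ) :
    extVec v ⬝ᵥ extVec v = v ⬝ᵥ v := by
  rw [extVec_dot]
  exact Finset.sum_congr rfl fun i _ => by simp [extVec, i.2, dotProduct]

lemma extVec_mulVec {w : Finset (Fin d)} (A : Matrix (Fin d) (Fin d) ℝ)
    (v : ↥w → ℝ) (i : Fin d) :
    (A *ᵥ extVec v) i = ∑ j : ↥w, v j * A i j.val := by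
  show (fun j => A i j) ⬝ᵥ extVec v = _
  rw [dotProduct_comm, extVec_dot]

lemma extVec_quad {w : Finset (Fin d)} (A : Matrix (Fin d) (Fin d) ℝ) (v : ↥w → ℝ) :
    extVec v ⬝ᵥ (A *ᵥ extVec v) = v ⬝ᵥ ((cellSub A w) *ᵥ v) := by
  rw [extVec_dot]
  refine Finset.sum_congr rfl fun i _ => ?_
  rw [extVec_mulVec]
  simp only [mulVec, dotProduct, cellSub, submatrix_apply]
  congr 1
  exact Finset.sum_congr rfl fun j _ => mul_comm _ _

lemma rayleigh_sub {a : ℝ} {A : Matrix (Fin d) (Fin d) ℝ}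
    (hA : ∀ v : Fin d → ℝ, a * (v ⬝ᵥ v) ≤ v ⬝ᵥ A.mulVec v) (w : Finset (Fin d)) :
    ∀ v : ↥w → ℝ, a * (v ⬝ᵥ v) ≤ v ⬝ᵥ (cellSub A w).mulVec v := by
  intro v
  have := hA (extVec v)
  rwa [extVec_dot_self, extVec_quad] at this

lemma posdef_sub {a : ℝ} (ha0 : 0 < a) {A : Matrix (Fin d) (Fin d) ℝ}
    (hherm : A.IsHermitian)
    (hA : ∀ v : Fin d → ℝ, a * (v ⬝ᵥ v) ≤ v ⬝ᵥ A.mulVec v) (w : Finset (Fin d)) :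
    (cellSub A w).PosDef := by
  refine posDef_iff_dotProduct_mulVec.mpr ⟨hherm.submatrix _, fun v hv => ?_⟩
  have h1 : 0 < v ⬝ᵥ v := by
    have h0 : 0 ≤ v ⬝ᵥ v := Finset.sum_nonneg fun i _ => mul_self_nonneg (v i)
    rcases lt_or_eq_of_le h0 with h | h
    · exact h
    · exact absurd (dotProduct_self_eq_zero.mp h.symm) hv
  have := rayleigh_sub hA w v
  have : 0 < v ⬝ᵥ (cellSub A w).mulVec v := lt_of_lt_of_le (mul_pos ha0 h1) this
  simpa using this

end Aux

lemma eig_lb_s18 {m : Type*} [Fintype m] [DecidableEq m] {B : Matrix m m ℝ}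
    (hB : B.IsHermitian) {a : ℝ}
    (h : ∀ v : m → ℝ, a * (v ⬝ᵥ v) ≤ v ⬝ᵥ B.mulVec v) (i : m) :
    a ≤ hB.eigenvalues i := by
  set v : m → ℝ := ⇑(hB.eigenvectorBasis i) with hv
  have hnorm : (inner ℝ (hB.eigenvectorBasis i) (hB.eigenvectorBasis i) : ℝ) = 1 := by
    rw [real_inner_self_eq_norm_mul_norm, hB.eigenvectorBasis.orthonormal.1 i, mul_one]
  rw [EuclideanSpace.inner_eq_star_dotProduct] at hnorm
  have hdot : v ⬝ᵥ v = 1 := by simpa [v] using hnorm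
  have h2 := h v
  rw [hdot, mul_one] at h2
  have h3 : hB.eigenvalues i = v ⬝ᵥ B.mulVec v := by
    rw [hB.eigenvalues_eq i]
    simp [v]
  linarith

lemma det_lb {m : Type*} [Fintype m] [DecidableEq m] {B : Matrix m m ℝ}
    (hB : B.IsHermitian) {a : ℝ} (ha0 : 0 < a)
    (h : ∀ v : m → ℝ, a * (v ⬝ᵥ v) ≤ v ⬝ᵥ B.mulVec v) :
    a ^ (Fintype.card m) ≤ B.det := by
  have hdet : B.det = ∏ i, hB.eigenvalues i := by
    have := hB.det_eq_prod_eigenvalues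
    simpa using this
  rw [hdet, ← Finset.card_univ, ← Finset.prod_const]
  exact Finset.prod_le_prod (fun _ _ => le_of_lt ha0) (fun i _ => eig_lb_s18 hB h i)

section Bounds

variable {d : ℕ} {a : ℝ} {A : Matrix (Fin d) (Fin d) ℝ}

lemma cellL_lower (q : Fin d → ℝ) (hq : ∀ j, 0 ≤ q j) (ha0 : 0 < a) (ha1 : a ≤ 1)
    (hherm : A.IsHermitian)
    (hA : ∀ v : Fin d → ℝ, a * (v ⬝ᵥ v) ≤ v ⬝ᵥ A.mulVec v)
    (x μ : Fin d → ℝ) (w : Finset (Fin d)) :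
    (d : ℝ) * Real.log a ≤ cellL q x μ A w := by
  classical
  have hpd : (cellSub A w).PosDef := posdef_sub ha0 hherm hA w
  have hdet : a ^ w.card ≤ (cellSub A w).det := by
    have := det_lb (hpd.1) ha0 (rayleigh_sub hA w)
    rwa [Fintype.card_coe] at this
  have hlog : (w.card : ℝ) * Real.log a ≤ Real.log (cellSub A w).det := by
    rw [← Real.log_pow]
    exact Real.log_le_log (pow_pos ha0 _) hdet
  have hla : Real.log a ≤ 0 := Real.log_nonpos (le_of_lt ha0) ha1
  have hcard : (w.card : ℝ) ≤ (d : ℝ) := by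
    exact_mod_cast (Finset.card_le_univ w).trans_eq (by simp)
  have h1 : (d : ℝ) * Real.log a ≤ (w.card : ℝ) * Real.log a :=
    mul_le_mul_of_nonpos_right hcard hla
  have h2 : 0 ≤ (w.card : ℝ) * Real.log (2 * Real.pi) := by
    have : (1:ℝ) ≤ 2 * Real.pi := by nlinarith [Real.pi_gt_three]
    exact mul_nonneg (Nat.cast_nonneg _) (Real.log_nonneg this)
  have h3 : 0 ≤ (fun i : ↥w => x i.val - μ i.val) ⬝ᵥ
      ((cellSub A w)⁻¹).mulVec (fun i : ↥w => x i.val - μ i.val) := by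
    have := hpd.inv.posSemidef.dotProduct_mulVec_nonneg (fun i : ↥w => x i.val - μ i.val)
    simpa using this
  have h4 : 0 ≤ ∑ j ∈ wᶜ, q j := Finset.sum_nonneg fun j _ => hq j
  simp only [cellL]
  linarith

lemma cellG_lb (q : Fin d → ℝ) (hq : ∀ j, 0 ≤ q j) (ha0 : 0 < a) (ha1 : a ≤ 1)
    (hherm : A.IsHermitian)
    (hA : ∀ v : Fin d → ℝ, a * (v ⬝ᵥ v) ≤ v ⬝ᵥ A.mulVec v)
    (μ x : Fin d → ℝ) :
    (d : ℝ) * Real.log a ≤ cellG q μ A x :=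
  le_ciInf fun w => cellL_lower q hq ha0 ha1 hherm hA x μ w

lemma cellG_ub (q : Fin d → ℝ) (μ x : Fin d → ℝ) :
    cellG q μ A x ≤ ∑ j, q j := by
  classical
  have h := ciInf_le (Set.Finite.bddBelow (Set.finite_range fun w => cellL q x μ A w))
    (∅ : Finset (Fin d))
  refine h.trans_eq ?_
  haveI : IsEmpty ↥(∅ : Finset (Fin d)) := Finset.isEmpty_coe_sort.2 rfl
  simp [cellL, Matrix.det_isEmpty, dotProduct]

end Bounds

section Cont

variable {d : ℕ} {a : ℝ}

-- abbreviations
local notation "Xp" d => ((Fin d → ℝ) × Matrix (Fin d) (Fin d) ℝ) × (Fin d → ℝ)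

lemma cellL_contOn (q : Fin d → ℝ) (ha0 : 0 < a) (w : Finset (Fin d)) :
    ContinuousOn (fun p : Xp d => cellL q p.2 p.1.1 p.1.2 w)
      {p : Xp d | (p.1.2).IsHermitian ∧
        ∀ v : Fin d → ℝ, a * (v ⬝ᵥ v) ≤ v ⬝ᵥ (p.1.2).mulVec v} := by
  classical
  set T : Set (Xp d) := {p : Xp d | (p.1.2).IsHermitian ∧
      ∀ v : Fin d → ℝ, a * (v ⬝ᵥ v) ≤ v ⬝ᵥ (p.1.2).mulVec v} with hT
  have hsub : Continuous fun p : Xp d => cellSub p.1.2 w := by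
    unfold cellSub
    exact (continuous_fst.snd).matrix_submatrix _ _
  have hdetc : Continuous fun p : Xp d => (cellSub p.1.2 w).det := hsub.matrix_det
  have hdetpos : ∀ p ∈ T, 0 < (cellSub p.1.2 w).det := by
    intro p hp
    refine lt_of_lt_of_le (pow_pos ha0 w.card) ?_
    have := det_lb ((hp.1).submatrix _) ha0 (rayleigh_sub hp.2 w)
    rwa [Fintype.card_coe] at this
  have term1 : ContinuousOn (fun p : Xp d => Real.log (cellSub p.1.2 w).det) T :=
    ContinuousOn.log hdetc.continuousOn (fun p hp => (hdetpos p hp).ne')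
  have hvec : Continuous fun p : Xp d => (fun i : ↥w => p.2 i.val - p.1.1 i.val) :=
    continuous_pi fun i =>
      ((continuous_apply (i : Fin d)).comp continuous_snd).sub
        ((continuous_apply (i : Fin d)).comp continuous_fst.fst)
  have hinv : ContinuousOn (fun p : Xp d => (cellSub p.1.2 w)⁻¹) T := by
    have hc : ContinuousOn
        (fun p : Xp d => ((cellSub p.1.2 w).det)⁻¹ • (cellSub p.1.2 w).adjugate) T :=
      (hdetc.continuousOn.inv₀ fun p hp => (hdetpos p hp).ne').smul
        hsub.matrix_adjugate.continuousOn
    refine ContinuousOn.congr hc fun p _ => ?_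
    rw [Matrix.inv_def, Ring.inverse_eq_inv']
  have term3 : ContinuousOn (fun p : Xp d =>
      (fun i : ↥w => p.2 i.val - p.1.1 i.val) ⬝ᵥ
        ((cellSub p.1.2 w)⁻¹).mulVec (fun i : ↥w => p.2 i.val - p.1.1 i.val)) T := by
    have hg : Continuous fun z : (↥w → ℝ) × Matrix ↥w ↥w ℝ => z.1 ⬝ᵥ z.2.mulVec z.1 :=
      continuous_fst.dotProduct (continuous_snd.matrix_mulVec continuous_fst)
    exact hg.comp_continuousOn (hvec.continuousOn.prodMk hinv)
  have : ContinuousOn (fun p : Xp d => cellL q p.2 p.1.1 p.1.2 w) T := by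
    simp only [cellL]
    exact ((term1.add continuousOn_const).add term3).add continuousOn_const
  exact this

lemma contOn_inf' {X ι : Type*} [TopologicalSpace X] {t : Set X}
    (s : Finset ι) (hs : s.Nonempty) (f : ι → X → ℝ)
    (hf : ∀ i, ContinuousOn (f i) t) :
    ContinuousOn (fun x => s.inf' hs fun i => f i x) t := by
  induction hs using Finset.Nonempty.cons_induction with
  | singleton i => exact (hf i).congr fun x _ => by simp
  | cons i s hi hs ih =>
    simp only [Finset.inf'_cons hs]
    exact (hf i).inf ih

lemma cellG_contOn (q : Fin d → ℝ) (ha0 : 0 < a) :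
    ContinuousOn (fun p : Xp d => cellG q p.1.1 p.1.2 p.2)
      {p : Xp d | (p.1.2).IsHermitian ∧
        ∀ v : Fin d → ℝ, a * (v ⬝ᵥ v) ≤ v ⬝ᵥ (p.1.2).mulVec v} := by
  have hrw : ∀ p : Xp d, cellG q p.1.1 p.1.2 p.2 =
      Finset.univ.inf' Finset.univ_nonempty (fun w => cellL q p.2 p.1.1 p.1.2 w) :=
    fun p => (Finset.inf'_univ_eq_ciInf _).symm
  refine ContinuousOn.congr ?_ fun p _ => hrw p
  exact contOn_inf' _ _ _ fun w => cellL_contOn q ha0 w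

end Cont

/-- For nonnegative penalties, `0 < a ≤ 1` and a probability measure `F` on `ℝ^d`,
the map `(μ, Σ) ↦ G(μ, Σ, F) = ∫ g_{μ,Σ}(x) dF(x)` is continuous on
`ℝ^d × 𝒫_a(d)`, where `𝒫_a(d)` is the set of symmetric positive definite
`d×d` matrices with smallest eigenvalue at least `a` (Rayleigh-quotient form). -/
theorem stmt_18 {d : ℕ} (q : Fin d → ℝ) (hq : ∀ j, 0 ≤ q j)
    (a : ℝ) (ha0 : 0 < a) (ha1 : a ≤ 1)
    (F : Measure (Fin d → ℝ)) [IsProbabilityMeasure F] :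
    ContinuousOn
      (fun p : (Fin d → ℝ) × Matrix (Fin d) (Fin d) ℝ =>
        ∫ x, cellG q p.1 p.2 x ∂F)
      (Set.univ ×ˢ {A : Matrix (Fin d) (Fin d) ℝ | A.PosDef ∧
        ∀ v : Fin d → ℝ, a * (v ⬝ᵥ v) ≤ v ⬝ᵥ A.mulVec v}) := by
  have hg := cellG_contOn (d := d) (a := a) q ha0
  have hsum : 0 ≤ ∑ j, q j := Finset.sum_nonneg fun j _ => hq j
  have hla : Real.log a ≤ 0 := Real.log_nonpos (le_of_lt ha0) ha1
  have hdl : (d : ℝ) * Real.log a ≤ 0 :=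
    mul_nonpos_iff.2 (Or.inl ⟨Nat.cast_nonneg d, hla⟩)
  haveI : FirstCountableTopology (Matrix (Fin d) (Fin d) ℝ) :=
    inferInstanceAs (FirstCountableTopology (Fin d → Fin d → ℝ))
  refine continuousOn_of_dominated
    (bound := fun _ => (∑ j, q j) - (d : ℝ) * Real.log a) ?_ ?_ ?_ ?_
  · intro p hp
    refine Continuous.aestronglyMeasurable ?_
    have hf : Continuous fun x : Fin d → ℝ => (p, x) :=
      continuous_const.prodMk continuous_id
    obtain ⟨-, hpd, hray⟩ := hp
    have := hg.comp_continuous hf fun x => ⟨hpd.1, hray⟩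
    simpa [Function.comp_def] using this
  · intro p hp
    filter_upwards with x
    rw [Real.norm_eq_abs, abs_le]
    obtain ⟨-, hpd, hray⟩ := hp
    have hlb := cellG_lb q hq ha0 ha1 hpd.1 hray p.1 x
    have hub := cellG_ub (A := p.2) q p.1 x
    constructor <;> linarith
  · exact integrable_const _
  · filter_upwards with x
    have hf : Continuous fun p : (Fin d → ℝ) × Matrix (Fin d) (Fin d) ℝ => (p, x) :=
      continuous_id.prodMk continuous_const
    have hmaps : Set.MapsTo (fun p : (Fin d → ℝ) × Matrix (Fin d) (Fin d) ℝ => (p, x))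
        (Set.univ ×ˢ {A : Matrix (Fin d) (Fin d) ℝ | A.PosDef ∧
          ∀ v : Fin d → ℝ, a * (v ⬝ᵥ v) ≤ v ⬝ᵥ A.mulVec v})
        {z : ((Fin d → ℝ) × Matrix (Fin d) (Fin d) ℝ) × (Fin d → ℝ) |
          (z.1.2).IsHermitian ∧
            ∀ v : Fin d → ℝ, a * (v ⬝ᵥ v) ≤ v ⬝ᵥ (z.1.2).mulVec v} := by
      intro p hp
      obtain ⟨-, hpd, hray⟩ := hp
      exact ⟨hpd.1, hray⟩
    have := hg.comp hf.continuousOn hmaps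
    simpa [Function.comp_def] using this
end
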